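/- Convergence of gradient descent on a biased objective: let F : ℝ^d → ℝ be differentiable with L-Lipschitz gradient and bounded below by F(w_T) ≥ 0 along the trajectory; suppose iterates w_{t+1} = w_t − (1/L)(∇F(w_t) + B_t) with ‖B_t‖ ≤ √2 α C for all t. Then after T steps, min_{0≤t<T} ‖∇F(w_t)‖² ≤ (2L F(w_0))/T + 2α²C², provided F(w_T) ≥ 0. -/

import Mathlib

open Finset

local notation "⟪" x ", " y "⟫" => @inner ℝ _ _ x y

lemma smooth_descent {d : ℕ} (F : EuclideanSpace ℝ (Fin d) → ℝ)
    (gF : EuclideanSpace ℝ (Fin d) → EuclideanSpace ℝ (Fin d))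
    (hF : ∀ w, HasGradientAt F (gF w) w)
    (L : ℝ) (hL : 0 ≤ L)
    (hLip : LipschitzWith (Real.toNNReal L) gF) (x y : EuclideanSpace ℝ (Fin d)) :
    F y ≤ F x + ⟪gF x, y - x⟫ + L / 2 * ‖y - x‖ ^ 2 := by
  set v := y - x with hv
  set c0 : ℝ := ⟪gF x, v⟫ with hc0
  set ψ : ℝ → ℝ := fun t => F (x + t • v) - t * c0 - L * ‖v‖ ^ 2 * t ^ 2 / 2 with hψ
  have hline : ∀ t : ℝ, HasDerivAt (fun t : ℝ => x + t • v) v t := fun t => by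
    simpa using ((hasDerivAt_id t).smul_const v).const_add x
  have hψ' : ∀ t : ℝ, HasDerivAt ψ (⟪gF (x + t • v), v⟫ - c0 - L * ‖v‖ ^ 2 * t) t := by
    intro t
    have h1 : HasDerivAt (fun t : ℝ => F (x + t • v)) (⟪gF (x + t • v), v⟫) t := by
      have := (hasGradientAt_iff_hasFDerivAt.mp (hF (x + t • v))).comp_hasDerivAt t (hline t)
      simpa [InnerProductSpace.toDual_apply_apply, Function.comp_def] using this
    have h2 : HasDerivAt (fun t : ℝ => t * c0) c0 t := by
      simpa using (hasDerivAt_id t).mul_const c0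
    have h3 : HasDerivAt (fun t : ℝ => L * ‖v‖ ^ 2 * t ^ 2 / 2) (L * ‖v‖ ^ 2 * t) t := by
      have := ((hasDerivAt_pow 2 t).const_mul (L * ‖v‖ ^ 2)).div_const 2
      convert this using 1
      · rfl
      · rfl
      · rw [show (2:ℕ) - 1 = 1 from rfl]; push_cast; ring
    exact (h1.sub h2).sub h3
  have hanti : AntitoneOn ψ (Set.Icc 0 1) := by
    apply antitoneOn_of_hasDerivWithinAt_nonpos (convex_Icc 0 1)
      (fun t _ => (hψ' t).continuousAt.continuousWithinAt)
      (fun t _ => (hψ' t).hasDerivWithinAt)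
    intro t ht
    rw [interior_Icc] at ht
    have ht0 : 0 ≤ t := ht.1.le
    have key : ⟪gF (x + t • v) - gF x, v⟫ ≤ L * ‖v‖ ^ 2 * t := by
      calc ⟪gF (x + t • v) - gF x, v⟫ ≤ ‖gF (x + t • v) - gF x‖ * ‖v‖ :=
            real_inner_le_norm _ _
        _ ≤ (L * (t * ‖v‖)) * ‖v‖ := by
            have h := hLip.dist_le_mul (x + t • v) x
            rw [Real.coe_toNNReal _ hL, dist_eq_norm, dist_eq_norm] at h
            have h' : ‖x + t • v - x‖ = t * ‖v‖ := by
              rw [add_sub_cancel_left, norm_smul, Real.norm_eq_abs, abs_of_nonneg ht0]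
            rw [h'] at h
            have : 0 ≤ ‖v‖ := norm_nonneg v
            nlinarith [norm_nonneg (gF (x + t • v) - gF x)]
        _ = L * ‖v‖ ^ 2 * t := by ring
    rw [inner_sub_left] at key
    linarith
  have h01 : ψ 1 ≤ ψ 0 := hanti (by norm_num) (by norm_num) zero_le_one
  simp only [ψ, one_smul, zero_smul, add_zero] at h01
  have hxy : x + v = y := by rw [hv]; abel
  rw [hxy] at h01
  nlinarith [h01]

theorem biased_gradient_descent_convergence
    (d : ℕ) (F : EuclideanSpace ℝ (Fin d) → ℝ)
    (gF : EuclideanSpace ℝ (Fin d) → EuclideanSpace ℝ (Fin d))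
    (hF : ∀ w, HasGradientAt F (gF w) w)
    (L : ℝ) (hL : 0 < L)
    (hLip : LipschitzWith (Real.toNNReal L) gF)
    (α C : ℝ) (hα : 0 ≤ α ∧ α ≤ 1) (hC : 0 ≤ C)
    (w B : ℕ → EuclideanSpace ℝ (Fin d))
    (hupd : ∀ t, w (t + 1) = w t - (1 / L) • (gF (w t) + B t))
    (hB : ∀ t, ‖B t‖ ≤ Real.sqrt 2 * α * C)
    (T : ℕ) (hT : 1 ≤ T) (hpos : 0 ≤ F (w T)) :
    ∃ t < T, ‖gF (w t)‖ ^ 2 ≤ 2 * L * F (w 0) / T + 2 * α ^ 2 * C ^ 2 := by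
  have hLne : L ≠ 0 := ne_of_gt hL
  have hBsq : ∀ t, ‖B t‖ ^ 2 ≤ 2 * α ^ 2 * C ^ 2 := by
    intro t
    have h1 : ‖B t‖ ^ 2 ≤ (Real.sqrt 2 * α * C) ^ 2 := by
      apply pow_le_pow_left₀ (norm_nonneg _) (hB t)
    calc ‖B t‖ ^ 2 ≤ (Real.sqrt 2 * α * C) ^ 2 := h1
      _ = 2 * α ^ 2 * C ^ 2 := by
          rw [mul_pow, mul_pow, Real.sq_sqrt (by norm_num : (0:ℝ) ≤ 2)]
  have key : ∀ t, ‖gF (w t)‖ ^ 2 ≤ 2 * L * (F (w t) - F (w (t + 1))) + ‖B t‖ ^ 2 := by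
    intro t
    have hd := smooth_descent F gF hF L hL.le hLip (w t) (w (t + 1))
    have hsub : w (t + 1) - w t = -((1 / L) • (gF (w t) + B t)) := by
      rw [hupd t]; abel
    rw [hsub] at hd
    have hinner : ⟪gF (w t), -((1 / L) • (gF (w t) + B t))⟫ =
        -(1 / L) * (‖gF (w t)‖ ^ 2 + ⟪gF (w t), B t⟫) := by
      rw [inner_neg_right, real_inner_smul_right, inner_add_right, real_inner_self_eq_norm_sq]
      ring
    have hnorm : ‖-((1 / L) • (gF (w t) + B t))‖ ^ 2 =
        (1 / L) ^ 2 * (‖gF (w t)‖ ^ 2 + 2 * ⟪gF (w t), B t⟫ + ‖B t‖ ^ 2) := by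
      rw [norm_neg, norm_smul, mul_pow, Real.norm_eq_abs, sq_abs]
      congr 1
      exact norm_add_sq_real _ _
    rw [hinner, hnorm] at hd
    set G := ‖gF (w t)‖ ^ 2
    set P : ℝ := ⟪gF (w t), B t⟫
    set Bn := ‖B t‖ ^ 2
    have h : F (w (t + 1)) - F (w t) ≤ (G * (-(1:ℝ)/2) + Bn / 2) / L := by
      have he : F (w t) + -(1 / L) * (G + P) + L / 2 * ((1 / L) ^ 2 * (G + 2 * P + Bn))
          = F (w t) + (G * (-(1:ℝ)/2) + Bn / 2) / L := by
        field_simp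
        ring
      linarith [hd.trans_eq he]
    rw [le_div_iff₀ hL] at h
    nlinarith
  have hsum : ∑ t ∈ range T, ‖gF (w t)‖ ^ 2 ≤
      2 * L * F (w 0) + T * (2 * α ^ 2 * C ^ 2) := by
    have h1 : ∑ t ∈ range T, ‖gF (w t)‖ ^ 2 ≤
        ∑ t ∈ range T, (2 * L * (F (w t) - F (w (t + 1))) + 2 * α ^ 2 * C ^ 2) := by
      apply Finset.sum_le_sum
      intro t _
      linarith [key t, hBsq t]
    rw [Finset.sum_add_distrib, ← Finset.mul_sum, Finset.sum_const, card_range,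
      nsmul_eq_mul] at h1
    rw [Finset.sum_range_sub' (fun t => F (w t)) T] at h1
    have : 2 * L * (F (w 0) - F (w T)) ≤ 2 * L * F (w 0) := by nlinarith
    linarith
  by_contra hcon
  push_neg at hcon
  have hTpos : (0:ℝ) < T := by exact_mod_cast hT
  have hlt : ∑ t ∈ range T, (2 * L * F (w 0) / T + 2 * α ^ 2 * C ^ 2) <
      ∑ t ∈ range T, ‖gF (w t)‖ ^ 2 := by
    apply Finset.sum_lt_sum_of_nonempty (by simp [Nat.pos_of_ne_zero]; omega)
    intro t ht
    exact hcon t (mem_range.mp ht)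
  rw [Finset.sum_const, card_range, nsmul_eq_mul] at hlt
  have : (T:ℝ) * (2 * L * F (w 0) / T + 2 * α ^ 2 * C ^ 2) =
      2 * L * F (w 0) + T * (2 * α ^ 2 * C ^ 2) := by
    field_simp
  linarith
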